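/- If K_5 is a subgraph of a finite simple graph G, then the complete bipartite graph K_{4,6} is a subgraph of G^(2). -/

import Mathlib

open SimpleGraph Function

/-- For a simple graph `G` on `V`, the graph `G^(t)`:
vertices are pairs `(i, j)` with `(i, j) ~ (k, l)` iff `j ≠ l` and `j ~ l` in `G`. -/
def gpow {V : Type*} (ι : Type*) (G : SimpleGraph V) : SimpleGraph (ι × V) where
  Adj a b := G.Adj a.2 b.2
  symm := ⟨by intro _ _ h; exact G.adj_symm h⟩
  loopless := ⟨by intro _ h; exact G.irrefl h⟩

/-- If `K_5` is a subgraph of a finite simple graph `G`, then `K_{4,6}` is a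
subgraph of `G^(2)`. -/
theorem stmt_2 {V : Type*} [Fintype V] (G : SimpleGraph V)
    (h : ∃ f : completeGraph (Fin 5) →g G, Injective f) :
    ∃ g : completeBipartiteGraph (Fin 4) (Fin 6) →g gpow (Fin 2) G, Injective g := by
  obtain ⟨f, hf⟩ := h
  have hadj : ∀ i j : Fin 5, i ≠ j → G.Adj (f i) (f j) := fun i j hij => f.map_adj hij
  set g0 : (Fin 4 ⊕ Fin 6) → Fin 2 × V := Sum.elim
      (fun a : Fin 4 => (⟨a.val / 2, by omega⟩, f ⟨a.val % 2, by omega⟩))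
      (fun b : Fin 6 => (⟨b.val / 3, by omega⟩, f ⟨b.val % 3 + 2, by omega⟩)) with hg0
  have hmap : ∀ {x y : Fin 4 ⊕ Fin 6},
      (completeBipartiteGraph (Fin 4) (Fin 6)).Adj x y → (gpow (Fin 2) G).Adj (g0 x) (g0 y) := by
    rintro (a | a) (b | b) hab <;> simp_all [completeBipartiteGraph, gpow, hg0]
    · refine hadj _ _ ?_; simp only [ne_eq, Fin.mk.injEq]; omega
    · refine (hadj _ _ ?_).symm; simp only [ne_eq, Fin.mk.injEq]; omega
  have hinj : Injective g0 := by
    rintro (a | a) (b | b) hab <;>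
      simp only [hg0, Sum.elim_inl, Sum.elim_inr, Prod.mk.injEq] at hab
    · have := hf hab.2
      simp only [Fin.mk.injEq] at this hab
      have : a = b := by
        apply Fin.ext; omega
      simp [this]
    · exact absurd (hf hab.2) (by simp only [ne_eq, Fin.mk.injEq]; omega)
    · exact absurd (hf hab.2) (by simp only [ne_eq, Fin.mk.injEq]; omega)
    · have := hf hab.2
      simp only [Fin.mk.injEq] at this hab
      have : a = b := by
        apply Fin.ext; omega
      simp [this]
  exact ⟨⟨g0, hmap⟩, hinj⟩
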